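/- arXiv:2510.16638 — 3 statements merged into one kernel-verified Lean document; each statement's English description precedes it below -/
import Mathlib

section
/- Assume the k vectors e_2^{(1)} − e_1^{(1)}, …, e_2^{(k)} − e_1^{(k)} are linearly independent over ℚ (the group of invertible elements of the root monoid is an active semidirect product). For a point x the following are equivalent: (i) x*y = y*x for every point y (x lies in the center Z(X) of the root monoid); (ii) x(u) = 0 for every u ∈ S such that ⟨p_r, u⟩ ≠ 0 for some r ≤ k (x lies in the closure of the orbit O_τ), and x(u + e_1^{(r)}) = x(u + e_2^{(r)}) for every r ≤ k and every u ∈ S with ⟨p_s, u⟩ = δ_{sr} for all s ≤ k. (This is Theorem 9.2: Z(X) = closure(O_τ) ∩ {χ^{u+e_1^{(r)}} = χ^{u+e_2^{(r)}} for all (r,u) ∈ I}, where I = {(r,u) : u ∈ S_σ, ⟨p_j,u⟩ = δ_{jr} for all j ≤ k}.) -/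
open Finset

def pairZ {n : ℕ} (v u : Fin n → ℤ) : ℤ := ∑ i, v i * u i

def InS {n m : ℕ} (q : Fin m → Fin n → ℤ) (u : Fin n → ℤ) : Prop :=
  ∀ j, 0 ≤ pairZ (q j) u

def IsPoint {n m : ℕ} {K : Type*} [Field K] (q : Fin m → Fin n → ℤ)
    (x : (Fin n → ℤ) → K) : Prop :=
  x 0 = 1 ∧ ∀ u v : Fin n → ℤ, InS q u → InS q v → x (u + v) = x u * x v

def Compatible {n m k : ℕ} (hkm : k ≤ m) (q : Fin m → Fin n → ℤ)
    (e : Fin k → Fin n → ℤ) : Prop :=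
  (∀ r s : Fin k, pairZ (q (Fin.castLE hkm s)) (e r) = if r = s then -1 else 0) ∧
  (∀ (r : Fin k) (j : Fin m), k ≤ (j : ℕ) → 0 ≤ pairZ (q j) (e r))

noncomputable def rmul {n m k : ℕ} {K : Type*} [Field K] (hkm : k ≤ m)
    (q : Fin m → Fin n → ℤ) (e1 e2 : Fin k → Fin n → ℤ)
    (x y : (Fin n → ℤ) → K) : (Fin n → ℤ) → K :=
  fun u =>
    ∑ i ∈ Fintype.piFinset (fun r : Fin k =>
        Finset.range ((pairZ (q (Fin.castLE hkm r)) u).toNat + 1)),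
      (∏ r : Fin k, ((pairZ (q (Fin.castLE hkm r)) u).toNat.choose (i r) : K)) *
        x (u + ∑ r : Fin k, (i r : ℤ) • e2 r) *
        y (u + ∑ r : Fin k, (pairZ (q (Fin.castLE hkm r)) u - (i r : ℤ)) • e1 r)

noncomputable def xtau {n m k : ℕ} (K : Type*) [Field K] (hkm : k ≤ m)
    (q : Fin m → Fin n → ℤ) : (Fin n → ℤ) → K :=
  fun u => if ∀ r : Fin k, pairZ (q (Fin.castLE hkm r)) u = 0 then 1 else 0

set_option linter.unusedSectionVars false
set_option linter.unusedVariables false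

lemma pairZ_add {n : ℕ} (v u w : Fin n → ℤ) : pairZ v (u + w) = pairZ v u + pairZ v w := by
  simp [pairZ, mul_add, Finset.sum_add_distrib]

lemma pairZ_smul {n : ℕ} (v : Fin n → ℤ) (c : ℤ) (w : Fin n → ℤ) :
    pairZ v (c • w) = c * pairZ v w := by
  simp [pairZ, Finset.mul_sum]
  exact Finset.sum_congr rfl fun i _ => by ring

lemma pairZ_sum {n : ℕ} {ι : Type*} (v : Fin n → ℤ) (s : Finset ι) (f : ι → Fin n → ℤ) :
    pairZ v (∑ i ∈ s, f i) = ∑ i ∈ s, pairZ v (f i) := by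
  simp [pairZ, Finset.mul_sum]
  rw [Finset.sum_comm]

lemma pairZ_zero {n : ℕ} (v : Fin n → ℤ) : pairZ v 0 = 0 := by simp [pairZ]

section Shift
variable {n m k : ℕ} (hkm : k ≤ m) (q : Fin m → Fin n → ℤ) (e1 e2 : Fin k → Fin n → ℤ)

lemma pair_shift (he1 : Compatible hkm q e1) (he2 : Compatible hkm q e2)
    (u : Fin n → ℤ) (b c : Fin k → ℤ) (s : Fin k) :
    pairZ (q (Fin.castLE hkm s)) (u + ∑ r, b r • e1 r + ∑ r, c r • e2 r)
      = pairZ (q (Fin.castLE hkm s)) u - b s - c s := by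
  rw [pairZ_add, pairZ_add, pairZ_sum, pairZ_sum]
  have h1 : ∀ r : Fin k, pairZ (q (Fin.castLE hkm s)) (b r • e1 r)
      = if r = s then -(b r) else 0 := by
    intro r; rw [pairZ_smul, he1.1 r s]; split <;> ring
  have h2 : ∀ r : Fin k, pairZ (q (Fin.castLE hkm s)) (c r • e2 r)
      = if r = s then -(c r) else 0 := by
    intro r; rw [pairZ_smul, he2.1 r s]; split <;> ring
  rw [Finset.sum_congr rfl fun r _ => h1 r, Finset.sum_congr rfl fun r _ => h2 r,
    Finset.sum_ite_eq' univ s (fun r => -(b r)), Finset.sum_ite_eq' univ s (fun r => -(c r))]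
  simp; ring

lemma InS_shift (he1 : Compatible hkm q e1) (he2 : Compatible hkm q e2)
    (u : Fin n → ℤ) (hu : InS q u) (b c : Fin k → ℤ)
    (hb : ∀ r, 0 ≤ b r) (hc : ∀ r, 0 ≤ c r)
    (hface : ∀ s : Fin k, 0 ≤ pairZ (q (Fin.castLE hkm s)) u - b s - c s) :
    InS q (u + ∑ r, b r • e1 r + ∑ r, c r • e2 r) := by
  intro j
  by_cases hj : (j : ℕ) < k
  · have hcast : Fin.castLE hkm ⟨(j : ℕ), hj⟩ = j := by
      apply Fin.ext; rfl
    rw [← hcast, pair_shift hkm q e1 e2 he1 he2]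
    exact hface _
  · push_neg at hj
    rw [pairZ_add, pairZ_add, pairZ_sum, pairZ_sum]
    have t1 : 0 ≤ ∑ r, pairZ (q j) (b r • e1 r) := by
      apply Finset.sum_nonneg; intro r _
      rw [pairZ_smul]; exact mul_nonneg (hb r) (he1.2 r j hj)
    have t2 : 0 ≤ ∑ r, pairZ (q j) (c r • e2 r) := by
      apply Finset.sum_nonneg; intro r _
      rw [pairZ_smul]; exact mul_nonneg (hc r) (he2.2 r j hj)
    have := hu j
    linarith

end Shift

section Shift2
variable {n m k : ℕ} (hkm : k ≤ m) (q : Fin m → Fin n → ℤ)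

lemma pair_shift2 (e1 e2 : Fin k → Fin n → ℤ) (he1 : Compatible hkm q e1)
    (he2 : Compatible hkm q e2) (u : Fin n → ℤ) (c : Fin k → ℤ) (s : Fin k) :
    pairZ (q (Fin.castLE hkm s)) (u + ∑ r, c r • e2 r)
      = pairZ (q (Fin.castLE hkm s)) u - c s := by
  have := pair_shift hkm q e1 e2 he1 he2 u 0 c s
  simpa using this

lemma pair_shift1 (e1 e2 : Fin k → Fin n → ℤ) (he1 : Compatible hkm q e1)
    (he2 : Compatible hkm q e2) (u : Fin n → ℤ) (b : Fin k → ℤ) (s : Fin k) :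
    pairZ (q (Fin.castLE hkm s)) (u + ∑ r, b r • e1 r)
      = pairZ (q (Fin.castLE hkm s)) u - b s := by
  have := pair_shift hkm q e1 e2 he1 he2 u b 0 s
  simpa using this

lemma InS_shift2 (e1 e2 : Fin k → Fin n → ℤ) (he1 : Compatible hkm q e1)
    (he2 : Compatible hkm q e2) (u : Fin n → ℤ) (hu : InS q u) (c : Fin k → ℤ)
    (hc : ∀ r, 0 ≤ c r)
    (hface : ∀ s : Fin k, c s ≤ pairZ (q (Fin.castLE hkm s)) u) :
    InS q (u + ∑ r, c r • e2 r) := by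
  have := InS_shift hkm q e1 e2 he1 he2 u hu 0 c (fun r => le_refl 0) hc
    (fun s => by have := hface s; simp; linarith)
  simpa using this

lemma InS_shift1 (e1 e2 : Fin k → Fin n → ℤ) (he1 : Compatible hkm q e1)
    (he2 : Compatible hkm q e2) (u : Fin n → ℤ) (hu : InS q u) (b : Fin k → ℤ)
    (hb : ∀ r, 0 ≤ b r)
    (hface : ∀ s : Fin k, b s ≤ pairZ (q (Fin.castLE hkm s)) u) :
    InS q (u + ∑ r, b r • e1 r) := by
  have := InS_shift hkm q e1 e2 he1 he2 u hu b 0 hb (fun r => le_refl 0)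
    (fun s => by have := hface s; simp; linarith)
  simpa using this

end Shift2

section Kill
variable {n m k : ℕ} {K : Type*} [Field K] (hkm : k ≤ m) (q : Fin m → Fin n → ℤ)
  (e1 e2 : Fin k → Fin n → ℤ)

lemma rmul_kill_left (he1 : Compatible hkm q e1) (he2 : Compatible hkm q e2)
    (z w : (Fin n → ℤ) → K)
    (hz : ∀ v, InS q v → (∃ s : Fin k, pairZ (q (Fin.castLE hkm s)) v ≠ 0) → z v = 0)
    (u : Fin n → ℤ) (hu : InS q u) :
    rmul hkm q e1 e2 z w u
      = z (u + ∑ r, pairZ (q (Fin.castLE hkm r)) u • e2 r) * w u := by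
  have hcast : ∀ r : Fin k, (((pairZ (q (Fin.castLE hkm r)) u).toNat : ℤ))
      = pairZ (q (Fin.castLE hkm r)) u := fun r => Int.toNat_of_nonneg (hu _)
  rw [rmul]
  rw [Finset.sum_eq_single_of_mem (fun r => (pairZ (q (Fin.castLE hkm r)) u).toNat)
    (Fintype.mem_piFinset.mpr fun r => Finset.mem_range.mpr (Nat.lt_succ_self _))]
  · have h1 : (∏ r : Fin k, ((pairZ (q (Fin.castLE hkm r)) u).toNat.choose
        ((pairZ (q (Fin.castLE hkm r)) u).toNat) : K)) = 1 := by
      simp [Nat.choose_self]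
    have h2 : (u + ∑ r : Fin k, (pairZ (q (Fin.castLE hkm r)) u
        - (((pairZ (q (Fin.castLE hkm r)) u).toNat : ℤ))) • e1 r) = u := by
      have h : ∀ r : Fin k, (pairZ (q (Fin.castLE hkm r)) u
          - (((pairZ (q (Fin.castLE hkm r)) u).toNat : ℤ))) • e1 r = 0 := fun r => by
        rw [hcast r]; simp
      rw [Finset.sum_congr rfl fun r _ => h r]; simp
    have h3 : (∑ r : Fin k, ((((pairZ (q (Fin.castLE hkm r)) u).toNat : ℤ))) • e2 r)
        = ∑ r, pairZ (q (Fin.castLE hkm r)) u • e2 r :=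
      Finset.sum_congr rfl fun r _ => by rw [hcast r]
    rw [h1, h2, h3, one_mul]
  · intro i hi hne
    have hle : ∀ r, i r ≤ (pairZ (q (Fin.castLE hkm r)) u).toNat := fun r =>
      Nat.lt_succ_iff.mp (Finset.mem_range.mp (Fintype.mem_piFinset.mp hi r))
    obtain ⟨s, hs⟩ := Function.ne_iff.mp hne
    have hInS : InS q (u + ∑ r : Fin k, ((i r : ℕ) : ℤ) • e2 r) :=
      InS_shift2 hkm q e1 e2 he1 he2 u hu (fun r => (i r : ℤ))
        (fun r => Int.natCast_nonneg _)
        (fun r => by have h1 := hle r; have h2 := hcast r; omega)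
    have hzz : z (u + ∑ r : Fin k, ((i r : ℕ) : ℤ) • e2 r) = 0 := by
      apply hz _ hInS
      refine ⟨s, ?_⟩
      rw [pair_shift2 hkm q e1 e2 he1 he2]
      have h1 := hle s; have h2 := hcast s
      omega
    rw [hzz]; ring

lemma rmul_kill_right (he1 : Compatible hkm q e1) (he2 : Compatible hkm q e2)
    (z w : (Fin n → ℤ) → K)
    (hz : ∀ v, InS q v → (∃ s : Fin k, pairZ (q (Fin.castLE hkm s)) v ≠ 0) → z v = 0)
    (u : Fin n → ℤ) (hu : InS q u) :
    rmul hkm q e1 e2 w z u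
      = w u * z (u + ∑ r, pairZ (q (Fin.castLE hkm r)) u • e1 r) := by
  have hcast : ∀ r : Fin k, (((pairZ (q (Fin.castLE hkm r)) u).toNat : ℤ))
      = pairZ (q (Fin.castLE hkm r)) u := fun r => Int.toNat_of_nonneg (hu _)
  rw [rmul]
  rw [Finset.sum_eq_single_of_mem (fun _ => (0 : ℕ))
    (Fintype.mem_piFinset.mpr fun r => Finset.mem_range.mpr (Nat.succ_pos _))]
  · have h1 : (∏ r : Fin k, ((pairZ (q (Fin.castLE hkm r)) u).toNat.choose 0 : K)) = 1 := by
      simp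
    have h2 : (u + ∑ r : Fin k, (((0:ℕ) : ℤ)) • e2 r) = u := by simp
    have h3 : (∑ r : Fin k, (pairZ (q (Fin.castLE hkm r)) u - ((0:ℕ) : ℤ)) • e1 r)
        = ∑ r, pairZ (q (Fin.castLE hkm r)) u • e1 r :=
      Finset.sum_congr rfl fun r _ => by norm_num
    rw [h1, h2, h3, one_mul]
  · intro i hi hne
    have hle : ∀ r, i r ≤ (pairZ (q (Fin.castLE hkm r)) u).toNat := fun r =>
      Nat.lt_succ_iff.mp (Finset.mem_range.mp (Fintype.mem_piFinset.mp hi r))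
    obtain ⟨s, hs⟩ := Function.ne_iff.mp hne
    have hInS : InS q (u + ∑ r : Fin k,
        (pairZ (q (Fin.castLE hkm r)) u - ((i r : ℕ) : ℤ)) • e1 r) :=
      InS_shift1 hkm q e1 e2 he1 he2 u hu
        (fun r => pairZ (q (Fin.castLE hkm r)) u - (i r : ℤ))
        (fun r => by have h1 := hle r; have h2 := hcast r; omega)
        (fun r => by have := Int.natCast_nonneg (i r); omega)
    have hzz : z (u + ∑ r : Fin k,
        (pairZ (q (Fin.castLE hkm r)) u - ((i r : ℕ) : ℤ)) • e1 r) = 0 := by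
      apply hz _ hInS
      refine ⟨s, ?_⟩
      rw [pair_shift1 hkm q e1 e2 he1 he2]
      have h2 := hcast s
      have h0 : i s ≠ 0 := hs
      omega
    rw [hzz]; ring

end Kill

section ClaimC
variable {n m k : ℕ} {K : Type*} [Field K] (hkm : k ≤ m) (q : Fin m → Fin n → ℤ)
  (e1 e2 : Fin k → Fin n → ℤ)

lemma claimC_aux (he1 : Compatible hkm q e1) (he2 : Compatible hkm q e2)
    (x : (Fin n → ℤ) → K)
    (hB : ∀ r : Fin k, ∀ u : Fin n → ℤ, InS q u →
      (∀ s : Fin k, pairZ (q (Fin.castLE hkm s)) u = if s = r then 1 else 0) →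
      x (u + e1 r) = x (u + e2 r))
    (u : Fin n → ℤ) (hu : InS q u) :
    ∀ (N : ℕ) (c : Fin k → ℕ), (∀ r, (c r : ℤ) ≤ pairZ (q (Fin.castLE hkm r)) u) →
      (∑ r, c r = N) →
      x (u + ∑ r, (pairZ (q (Fin.castLE hkm r)) u - (c r : ℤ)) • e1 r
          + ∑ r, (c r : ℤ) • e2 r)
        = x (u + ∑ r, pairZ (q (Fin.castLE hkm r)) u • e1 r) := by
  intro N
  induction N with
  | zero =>
    intro c hc hsum
    have hc0 : ∀ r, c r = 0 := by
      intro r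
      exact (Finset.sum_eq_zero_iff.mp hsum) r (Finset.mem_univ r)
    have h1 : (∑ r, ((c r : ℕ) : ℤ) • e2 r) = 0 :=
      Finset.sum_eq_zero fun r _ => by rw [hc0 r]; simp
    have h2 : (∑ r, (pairZ (q (Fin.castLE hkm r)) u - ((c r : ℕ) : ℤ)) • e1 r)
        = ∑ r, pairZ (q (Fin.castLE hkm r)) u • e1 r := by
      refine Finset.sum_congr rfl fun r _ => by rw [hc0 r]; norm_num
    rw [h1, h2, add_zero]
  | succ N ih =>
    intro c hc hsum
    have hex : ∃ r, c r ≠ 0 := by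
      by_contra h
      push_neg at h
      have : ∑ r, c r = 0 := Finset.sum_eq_zero fun r _ => h r
      omega
    obtain ⟨r, hr⟩ := hex
    set c' : Fin k → ℕ := Function.update c r (c r - 1) with hc'def
    have hc'r : c' r = c r - 1 := Function.update_self r (c r - 1) c
    have hc's : ∀ s, s ≠ r → c' s = c s := fun s hs => Function.update_of_ne hs _ _
    have hsum' : ∑ s, c' s = N := by
      have h1 : ∑ s, c' s = (c r - 1) + ∑ s ∈ Finset.univ \ {r}, c s := by
        rw [hc'def, Finset.sum_update_of_mem (Finset.mem_univ r)]
      have h2 : ∑ s, c s = c r + ∑ s ∈ Finset.univ \ {r}, c s := by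
        rw [Finset.sum_eq_add_sum_sdiff_singleton_of_mem (Finset.mem_univ r)]
      omega
    have hdelta : ∀ s, (c s : ℤ) - (c' s : ℤ) = if s = r then 1 else 0 := by
      intro s
      by_cases h : s = r
      · subst h
        rw [hc'r, if_pos rfl]
        have h1 : 1 ≤ c s := Nat.one_le_iff_ne_zero.mpr hr
        push_cast [Nat.cast_sub h1]
        ring
      · rw [hc's s h, if_neg h]; ring
    have hc'le : ∀ s, (c' s : ℤ) ≤ pairZ (q (Fin.castLE hkm s)) u := by
      intro s
      have h1 := hdelta s
      have h2 := hc s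
      by_cases h : s = r
      · rw [if_pos h] at h1; omega
      · rw [if_neg h] at h1; omega
    -- the intermediate point w
    set w : Fin n → ℤ := u + ∑ s, (pairZ (q (Fin.castLE hkm s)) u - (c s : ℤ)) • e1 s
        + ∑ s, ((c' s : ℕ) : ℤ) • e2 s with hwdef
    have hwpair : ∀ t : Fin k, pairZ (q (Fin.castLE hkm t)) w = if t = r then 1 else 0 := by
      intro t
      rw [hwdef, pair_shift hkm q e1 e2 he1 he2, ← hdelta t]
      ring
    have hwS : InS q w := by
      rw [hwdef]
      apply InS_shift hkm q e1 e2 he1 he2 u hu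
      · intro s; have := hc s; omega
      · intro s; exact Int.natCast_nonneg _
      · intro s
        have h1 := hdelta s
        by_cases h : s = r
        · rw [if_pos h] at h1; omega
        · rw [if_neg h] at h1; omega
    have hstep := hB r w hwS hwpair
    have key1 : w + e1 r = u + ∑ s, (pairZ (q (Fin.castLE hkm s)) u - (c' s : ℤ)) • e1 s
        + ∑ s, ((c' s : ℕ) : ℤ) • e2 s := by
      have h : ∑ s, (pairZ (q (Fin.castLE hkm s)) u - (c' s : ℤ)) • e1 s
          = (∑ s, (pairZ (q (Fin.castLE hkm s)) u - (c s : ℤ)) • e1 s) + e1 r := by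
        have hterm : ∀ s : Fin k, (pairZ (q (Fin.castLE hkm s)) u - (c' s : ℤ)) • e1 s
            = (pairZ (q (Fin.castLE hkm s)) u - (c s : ℤ)) • e1 s
              + (if s = r then (1:ℤ) else 0) • e1 s := by
          intro s
          rw [← add_smul, ← hdelta s]
          congr 1; ring
        rw [Finset.sum_congr rfl fun s _ => hterm s, Finset.sum_add_distrib]
        congr 1
        simp [ite_smul]
      rw [hwdef, h]
      abel
    have key2 : w + e2 r = u + ∑ s, (pairZ (q (Fin.castLE hkm s)) u - (c s : ℤ)) • e1 s
        + ∑ s, ((c s : ℕ) : ℤ) • e2 s := by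
      have h : ∑ s, ((c s : ℕ) : ℤ) • e2 s
          = (∑ s, ((c' s : ℕ) : ℤ) • e2 s) + e2 r := by
        have hterm : ∀ s : Fin k, ((c s : ℕ) : ℤ) • e2 s
            = ((c' s : ℕ) : ℤ) • e2 s + (if s = r then (1:ℤ) else 0) • e2 s := by
          intro s
          rw [← add_smul, ← hdelta s]
          congr 1; ring
        rw [Finset.sum_congr rfl fun s _ => hterm s, Finset.sum_add_distrib]
        congr 1
        simp [ite_smul]
      rw [hwdef, h]
      abel
    calc x (u + ∑ s, (pairZ (q (Fin.castLE hkm s)) u - (c s : ℤ)) • e1 s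
            + ∑ s, ((c s : ℕ) : ℤ) • e2 s)
        = x (w + e2 r) := by rw [key2]
      _ = x (w + e1 r) := hstep.symm
      _ = x (u + ∑ s, (pairZ (q (Fin.castLE hkm s)) u - (c' s : ℤ)) • e1 s
            + ∑ s, ((c' s : ℕ) : ℤ) • e2 s) := by rw [key1]
      _ = x (u + ∑ s, pairZ (q (Fin.castLE hkm s)) u • e1 s) := ih c' hc'le hsum'

lemma claimC (he1 : Compatible hkm q e1) (he2 : Compatible hkm q e2)
    (x : (Fin n → ℤ) → K)
    (hB : ∀ r : Fin k, ∀ u : Fin n → ℤ, InS q u →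
      (∀ s : Fin k, pairZ (q (Fin.castLE hkm s)) u = if s = r then 1 else 0) →
      x (u + e1 r) = x (u + e2 r))
    (u : Fin n → ℤ) (hu : InS q u) :
    x (u + ∑ r, pairZ (q (Fin.castLE hkm r)) u • e1 r)
      = x (u + ∑ r, pairZ (q (Fin.castLE hkm r)) u • e2 r) := by
  have hcast : ∀ r : Fin k, (((pairZ (q (Fin.castLE hkm r)) u).toNat : ℤ))
      = pairZ (q (Fin.castLE hkm r)) u := fun r => Int.toNat_of_nonneg (hu _)
  have := claimC_aux hkm q e1 e2 he1 he2 x hB u hu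
    (∑ r, (pairZ (q (Fin.castLE hkm r)) u).toNat)
    (fun r => (pairZ (q (Fin.castLE hkm r)) u).toNat)
    (fun r => by rw [hcast r]) rfl
  have h1 : (∑ r, (pairZ (q (Fin.castLE hkm r)) u
      - (((pairZ (q (Fin.castLE hkm r)) u).toNat : ℕ) : ℤ)) • e1 r) = 0 :=
    Finset.sum_eq_zero fun r _ => by rw [hcast r]; simp
  have h2 : (∑ r, ((((pairZ (q (Fin.castLE hkm r)) u).toNat : ℕ)) : ℤ) • e2 r)
      = ∑ r, pairZ (q (Fin.castLE hkm r)) u • e2 r :=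
    Finset.sum_congr rfl fun r _ => by rw [hcast r]
  rw [h1, h2, add_zero] at this
  exact this.symm

end ClaimC

section Points
variable {n m k : ℕ} {K : Type*} [Field K] (hkm : k ≤ m) (q : Fin m → Fin n → ℤ)

lemma xtau_point : IsPoint q (xtau (k := k) K hkm q) := by
  constructor
  · simp [xtau, pairZ]
  · intro u v hu hv
    have hadd : ∀ r : Fin k, pairZ (q (Fin.castLE hkm r)) (u + v)
        = pairZ (q (Fin.castLE hkm r)) u + pairZ (q (Fin.castLE hkm r)) v :=
      fun r => pairZ_add _ _ _
    by_cases h1 : ∀ r : Fin k, pairZ (q (Fin.castLE hkm r)) u = 0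
    · by_cases h2 : ∀ r : Fin k, pairZ (q (Fin.castLE hkm r)) v = 0
      · have h3 : ∀ r : Fin k, pairZ (q (Fin.castLE hkm r)) (u + v) = 0 := by
          intro r; rw [hadd r, h1 r, h2 r]; ring
        simp [xtau, h1, h2, h3]
      · have h3 : ¬ ∀ r : Fin k, pairZ (q (Fin.castLE hkm r)) (u + v) = 0 := by
          intro h3
          apply h2
          intro r
          have := h3 r
          rw [hadd r] at this
          have a1 := hu (Fin.castLE hkm r)
          have a2 := hv (Fin.castLE hkm r)
          omega
        simp [xtau, h3, h2]
    · have h3 : ¬ ∀ r : Fin k, pairZ (q (Fin.castLE hkm r)) (u + v) = 0 := by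
        intro h3
        apply h1
        intro r
        have := h3 r
        rw [hadd r] at this
        have a1 := hu (Fin.castLE hkm r)
        have a2 := hv (Fin.castLE hkm r)
        omega
      simp [xtau, h3, h1]

lemma one_point : IsPoint q (fun _ : Fin n → ℤ => (1 : K)) := by
  constructor <;> simp

lemma char_point [CharZero K] (i₀ : Fin n) :
    IsPoint q (fun v : Fin n → ℤ => (2:K) ^ (v i₀)) := by
  constructor
  · simp
  · intro u v _ _
    show (2:K) ^ ((u + v) i₀) = _
    rw [Pi.add_apply, zpow_add₀ (by norm_num : (2:K) ≠ 0)]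

lemma mul_point (x y : (Fin n → ℤ) → K) (hx : IsPoint q x) (hy : IsPoint q y) :
    IsPoint q (fun v => x v * y v) := by
  constructor
  · simp [hx.1, hy.1]
  · intro u v hu hv
    simp only [hx.2 u v hu hv, hy.2 u v hu hv]
    ring

lemma xtau_kill (v : Fin n → ℤ)
    (hv : ∃ s : Fin k, pairZ (q (Fin.castLE hkm s)) v ≠ 0) :
    xtau (k := k) K hkm q v = 0 := by
  rw [xtau, if_neg]
  intro h
  obtain ⟨s, hs⟩ := hv
  exact hs (h s)

end Points

section LinInd
variable {n m k : ℕ}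

lemma lin_ne (e1 e2 : Fin k → Fin n → ℤ)
    (hact : LinearIndependent ℚ
      fun r : Fin k => fun i : Fin n => ((e2 r i - e1 r i : ℤ) : ℚ))
    (u : Fin n → ℤ) (A : Fin k → ℤ) (hne : ∃ r, A r ≠ 0) :
    (u + ∑ r, A r • e1 r) ≠ (u + ∑ r, A r • e2 r) := by
  intro h
  have h0 : (∑ r, A r • e1 r) = ∑ r, A r • e2 r := by
    have := add_left_cancel h
    exact this
  have hzero : (∑ r : Fin k, (A r : ℚ) • (fun i : Fin n => ((e2 r i - e1 r i : ℤ) : ℚ)))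
      = 0 := by
    funext i
    have hcoord : (∑ r : Fin k, A r * e1 r i) = ∑ r : Fin k, A r * e2 r i := by
      have := congrFun h0 i
      simpa [Finset.sum_apply] using this
    have hint : (∑ r : Fin k, A r * (e2 r i - e1 r i)) = 0 := by
      have : (∑ r : Fin k, A r * (e2 r i - e1 r i))
          = (∑ r : Fin k, A r * e2 r i) - ∑ r : Fin k, A r * e1 r i := by
        rw [← Finset.sum_sub_distrib]
        exact Finset.sum_congr rfl fun r _ => by ring
      rw [this, ← hcoord]
      ring
    simp only [Finset.sum_apply, Pi.smul_apply, smul_eq_mul, Pi.zero_apply]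
    have := congrArg (fun z : ℤ => (z : ℚ)) hint
    push_cast at this
    rw [← this]
    exact Finset.sum_congr rfl fun r _ => by push_cast; ring
  obtain ⟨r, hr⟩ := hne
  have := Fintype.linearIndependent_iff.mp hact (fun r => (A r : ℚ)) hzero r
  exact hr (by exact_mod_cast this)

end LinInd

lemma two_zpow_inj {K : Type*} [Field K] [CharZero K] {a b : ℤ}
    (h : (2:K)^a = (2:K)^b) : a = b := by
  have h2 : (2:K) = ((2:ℚ):K) := by norm_num
  rw [h2, ← Rat.cast_zpow, ← Rat.cast_zpow] at h
  exact zpow_right_injective₀ (by norm_num : (0:ℚ) < 2) (by norm_num) (Rat.cast_injective h)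

theorem statement_16 {n m k : ℕ} {K : Type*} [Field K] [CharZero K]
    (hn : 1 ≤ n) (hk : 1 ≤ k) (hkm : k ≤ m)
    (q : Fin m → Fin n → ℤ) (e1 e2 : Fin k → Fin n → ℤ)
    (he1 : Compatible hkm q e1) (he2 : Compatible hkm q e2)
    (hact : LinearIndependent ℚ
      fun r : Fin k => fun i : Fin n => ((e2 r i - e1 r i : ℤ) : ℚ))
    (x : (Fin n → ℤ) → K) (hx : IsPoint q x) :
    (∀ y : (Fin n → ℤ) → K, IsPoint q y → ∀ u : Fin n → ℤ, InS q u →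
        rmul hkm q e1 e2 x y u = rmul hkm q e1 e2 y x u) ↔
    ((∀ u : Fin n → ℤ, InS q u →
        (∃ r : Fin k, pairZ (q (Fin.castLE hkm r)) u ≠ 0) → x u = 0) ∧
      (∀ r : Fin k, ∀ u : Fin n → ℤ, InS q u →
        (∀ s : Fin k, pairZ (q (Fin.castLE hkm s)) u = if s = r then 1 else 0) →
        x (u + e1 r) = x (u + e2 r))) := by
  constructor
  · intro hcen
    have hA : ∀ u : Fin n → ℤ, InS q u →
        (∃ r : Fin k, pairZ (q (Fin.castLE hkm r)) u ≠ 0) → x u = 0 := by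
      intro u hu hex
      by_contra hxu
      have hne : (u + ∑ r, pairZ (q (Fin.castLE hkm r)) u • e1 r)
          ≠ (u + ∑ r, pairZ (q (Fin.castLE hkm r)) u • e2 r) :=
        lin_ne e1 e2 hact u _ hex
      obtain ⟨i₀, hi₀⟩ := Function.ne_iff.mp hne
      set y : (Fin n → ℤ) → K := fun v => xtau (k := k) K hkm q v * (2:K)^(v i₀) with hydef
      have hy : IsPoint q y :=
        mul_point q _ _ (xtau_point hkm q) (char_point q i₀)
      have hykill : ∀ v, InS q v →
          (∃ s : Fin k, pairZ (q (Fin.castLE hkm s)) v ≠ 0) → y v = 0 := by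
        intro v _ hv
        rw [hydef]
        simp only []
        rw [xtau_kill hkm q v hv, zero_mul]
      have h := hcen y hy u hu
      rw [rmul_kill_right hkm q e1 e2 he1 he2 y x hykill u hu,
        rmul_kill_left hkm q e1 e2 he1 he2 y x hykill u hu] at h
      have hz1 : ∀ s : Fin k, pairZ (q (Fin.castLE hkm s))
          (u + ∑ r, pairZ (q (Fin.castLE hkm r)) u • e1 r) = 0 := by
        intro s
        rw [pair_shift1 hkm q e1 e2 he1 he2]
        ring
      have hz2 : ∀ s : Fin k, pairZ (q (Fin.castLE hkm s))
          (u + ∑ r, pairZ (q (Fin.castLE hkm r)) u • e2 r) = 0 := by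
        intro s
        rw [pair_shift2 hkm q e1 e2 he1 he2]
        ring
      have hy1 : y (u + ∑ r, pairZ (q (Fin.castLE hkm r)) u • e1 r)
          = (2:K) ^ ((u + ∑ r, pairZ (q (Fin.castLE hkm r)) u • e1 r) i₀) := by
        rw [hydef]
        simp only []
        rw [xtau, if_pos hz1, one_mul]
      have hy2 : y (u + ∑ r, pairZ (q (Fin.castLE hkm r)) u • e2 r)
          = (2:K) ^ ((u + ∑ r, pairZ (q (Fin.castLE hkm r)) u • e2 r) i₀) := by
        rw [hydef]
        simp only []
        rw [xtau, if_pos hz2, one_mul]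
      rw [hy1, hy2] at h
      have h2 : (2:K) ^ ((u + ∑ r, pairZ (q (Fin.castLE hkm r)) u • e1 r) i₀)
          = (2:K) ^ ((u + ∑ r, pairZ (q (Fin.castLE hkm r)) u • e2 r) i₀) := by
        rw [mul_comm (x u)] at h
        exact mul_right_cancel₀ hxu h
      exact hi₀ (two_zpow_inj h2)
    refine ⟨hA, ?_⟩
    intro r u hu hpair
    have h := hcen (fun _ => (1:K)) (one_point q) u hu
    rw [rmul_kill_left hkm q e1 e2 he1 he2 x (fun _ => (1:K)) hA u hu,
      rmul_kill_right hkm q e1 e2 he1 he2 x (fun _ => (1:K)) hA u hu] at h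
    have hsum1 : (∑ s, pairZ (q (Fin.castLE hkm s)) u • e1 s) = e1 r := by
      rw [Finset.sum_congr rfl fun s _ => by rw [hpair s]]
      simp [ite_smul]
    have hsum2 : (∑ s, pairZ (q (Fin.castLE hkm s)) u • e2 s) = e2 r := by
      rw [Finset.sum_congr rfl fun s _ => by rw [hpair s]]
      simp [ite_smul]
    rw [hsum1, hsum2, mul_one, one_mul] at h
    exact h.symm
  · rintro ⟨hA, hB⟩ y hy u hu
    rw [rmul_kill_left hkm q e1 e2 he1 he2 x y hA u hu,
      rmul_kill_right hkm q e1 e2 he1 he2 x y hA u hu,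
      ← claimC hkm q e1 e2 he1 he2 x hB u hu]
    ring
end

section
/- Let K be a field of characteristic zero and let n ≥ k ≥ 0 be integers. For each r = 1, …, k fix nonnegative integers a_i^{(r)} and b_i^{(r)} for i = k+1, …, n. Define an operation * on K^n by: (x*y)_r = x_r · ∏_{i=k+1}^n y_i^{a_i^{(r)}} + y_r · ∏_{i=k+1}^n x_i^{b_i^{(r)}} for r = 1, …, k, and (x*y)_i = x_i · y_i for i = k+1, …, n. Then (K^n, *) is a monoid: * is associative and the element e with e_r = 0 for r ≤ k and e_i = 1 for i > k is a two-sided identity; moreover, the invertible elements of this monoid are exactly the x ∈ K^n with x_i ≠ 0 for all i = k+1, …, n. (This is the description of all root-monoid structures on affine space 𝔸^n from Section 6.1.) -/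
open Finset

theorem statement_18 {K : Type*} [Field K] [CharZero K] {n k : ℕ} (hkn : k ≤ n)
    (a b : Fin k → Fin n → ℕ)
    (mul : (Fin n → K) → (Fin n → K) → (Fin n → K))
    (hmul : ∀ (x y : Fin n → K) (i : Fin n),
      mul x y i =
        if h : (i : ℕ) < k then
          x i * (∏ j ∈ Finset.univ.filter fun j : Fin n => k ≤ (j : ℕ),
              y j ^ a (⟨(i : ℕ), h⟩ : Fin k) j)
            + y i * ∏ j ∈ Finset.univ.filter fun j : Fin n => k ≤ (j : ℕ),
                x j ^ b (⟨(i : ℕ), h⟩ : Fin k) j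
        else x i * y i)
    (e : Fin n → K) (he : ∀ i : Fin n, e i = if (i : ℕ) < k then 0 else 1) :
    (∀ x y z : Fin n → K, mul (mul x y) z = mul x (mul y z)) ∧
    (∀ x : Fin n → K, mul e x = x ∧ mul x e = x) ∧
    (∀ x : Fin n → K,
      (∃ y : Fin n → K, mul x y = e ∧ mul y x = e) ↔
        ∀ i : Fin n, k ≤ (i : ℕ) → x i ≠ 0) := by
  set S : Finset (Fin n) := Finset.univ.filter fun j : Fin n => k ≤ (j : ℕ) with hS
  have hmemS : ∀ j : Fin n, j ∈ S → k ≤ (j : ℕ) := by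
    intro j hj
    simpa [hS] using hj
  have hprod_mul : ∀ (c : Fin n → ℕ) (x y : Fin n → K),
      ∏ j ∈ S, (mul x y j) ^ c j = (∏ j ∈ S, x j ^ c j) * (∏ j ∈ S, y j ^ c j) := by
    intro c x y
    rw [← Finset.prod_mul_distrib]
    refine Finset.prod_congr rfl fun j hj => ?_
    rw [hmul, dif_neg (Nat.not_lt.mpr (hmemS j hj)), mul_pow]
  have hprodE : ∀ c : Fin n → ℕ, ∏ j ∈ S, (e j) ^ c j = 1 := by
    intro c
    refine Finset.prod_eq_one fun j hj => ?_
    rw [he, if_neg (Nat.not_lt.mpr (hmemS j hj)), one_pow]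
  refine ⟨?_, ?_, ?_⟩
  · intro x y z
    funext i
    by_cases h : (i : ℕ) < k
    · rw [hmul (mul x y) z i, hmul x (mul y z) i, dif_pos h, dif_pos h,
        hmul x y i, dif_pos h, hmul y z i, dif_pos h,
        hprod_mul (b ⟨i, h⟩) x y, hprod_mul (a ⟨i, h⟩) y z]
      ring
    · rw [hmul (mul x y) z i, hmul x (mul y z) i, dif_neg h, dif_neg h,
        hmul x y i, dif_neg h, hmul y z i, dif_neg h]
      ring
  · intro x
    constructor <;> funext i <;> by_cases h : (i : ℕ) < k
    · rw [hmul, dif_pos h, he i, if_pos h, hprodE]; ring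
    · rw [hmul, dif_neg h, he i, if_neg h, one_mul]
    · rw [hmul, dif_pos h, he i, if_pos h, hprodE]; ring
    · rw [hmul, dif_neg h, he i, if_neg h, mul_one]
  · intro x
    constructor
    · rintro ⟨y, h1, -⟩ i hi
      have := congrFun h1 i
      rw [hmul, dif_neg (Nat.not_lt.mpr hi), he, if_neg (Nat.not_lt.mpr hi)] at this
      exact left_ne_zero_of_mul_eq_one this
    · intro hx
      have hxS : ∀ j ∈ S, x j ≠ 0 := fun j hj => hx j (hmemS j hj)
      have hPne : ∀ c : Fin n → ℕ, (∏ j ∈ S, x j ^ c j) ≠ 0 := fun c =>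
        Finset.prod_ne_zero_iff.mpr fun j hj => pow_ne_zero _ (hxS j hj)
      refine ⟨fun i => if h : (i : ℕ) < k then
          -(x i) * (∏ j ∈ S, x j ^ a ⟨i, h⟩ j)⁻¹ * (∏ j ∈ S, x j ^ b ⟨i, h⟩ j)⁻¹
        else (x i)⁻¹, ?_, ?_⟩ <;>
      · funext i
        by_cases h : (i : ℕ) < k
        · rw [hmul, dif_pos h, he i, if_pos h]
          have hy : ∀ c : Fin n → ℕ,
              (∏ j ∈ S, (if h : (j : ℕ) < k then
                -(x j) * (∏ j' ∈ S, x j' ^ a ⟨j, h⟩ j')⁻¹ * (∏ j' ∈ S, x j' ^ b ⟨j, h⟩ j')⁻¹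
              else (x j)⁻¹) ^ c j) = (∏ j ∈ S, x j ^ c j)⁻¹ := by
            intro c
            rw [← Finset.prod_inv_distrib]
            refine Finset.prod_congr rfl fun j hj => ?_
            rw [dif_neg (Nat.not_lt.mpr (hmemS j hj)), inv_pow]
          simp only [hy, dif_pos h]
          have hPa := hPne (a ⟨i, h⟩)
          have hPb := hPne (b ⟨i, h⟩)
          field_simp
          ring
        · rw [hmul, dif_neg h, he i, if_neg h]
          simp only [dif_neg h]
          first
          | exact mul_inv_cancel₀ (hx i (Nat.not_lt.mp h))
          | exact inv_mul_cancel₀ (hx i (Nat.not_lt.mp h))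
end

section
/- Let K be a field of characteristic zero, let a_1, a_2, c_1, c_2 be nonnegative integers and b_1, b_2, d_1, d_2 positive integers. Let X = {x ∈ K^5 : x_1·x_2 = x_4·x_5} (the product of the quadratic cone and the affine line). Define for x, y ∈ K^5 the element x*y ∈ K^5 by: (x*y)_1 = x_1 y_3^{a_1} y_4^{b_1} + y_1 x_3^{a_2} x_4^{b_2}; (x*y)_2 = x_2 y_3^{c_1} y_4^{d_1} + y_2 x_3^{c_2} x_4^{d_2}; (x*y)_3 = x_3 y_3; (x*y)_4 = x_4 y_4; (x*y)_5 = x_5 y_3^{a_1+c_1} y_4^{b_1+d_1−1} + y_5 x_3^{a_2+c_2} x_4^{b_2+d_2−1} + x_1 x_3^{c_2} x_4^{d_2−1} y_2 y_3^{a_1} y_4^{b_1−1} + y_1 y_3^{c_1} y_4^{d_1−1} x_2 x_3^{a_2} x_4^{b_2−1}. Then: (a) if x, y ∈ X then x*y ∈ X; (b) * is associative on X; (c) the element (0, 0, 1, 1, 0) ∈ X is a two-sided identity for *. (This is the root-monoid structure on the cylinder over a quadratic cone from Example 6.2.) -/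
open Finset

theorem statement_19 {K : Type*} [Field K] [CharZero K]
    (a1 a2 c1 c2 b1 b2 d1 d2 : ℕ)
    (hb1 : 0 < b1) (hb2 : 0 < b2) (hd1 : 0 < d1) (hd2 : 0 < d2)
    (mul : (Fin 5 → K) → (Fin 5 → K) → (Fin 5 → K))
    (hmul : ∀ x y : Fin 5 → K,
      mul x y 0 = x 0 * y 2 ^ a1 * y 3 ^ b1 + y 0 * x 2 ^ a2 * x 3 ^ b2 ∧
      mul x y 1 = x 1 * y 2 ^ c1 * y 3 ^ d1 + y 1 * x 2 ^ c2 * x 3 ^ d2 ∧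
      mul x y 2 = x 2 * y 2 ∧
      mul x y 3 = x 3 * y 3 ∧
      mul x y 4 = x 4 * y 2 ^ (a1 + c1) * y 3 ^ (b1 + d1 - 1)
        + y 4 * x 2 ^ (a2 + c2) * x 3 ^ (b2 + d2 - 1)
        + x 0 * x 2 ^ c2 * x 3 ^ (d2 - 1) * y 1 * y 2 ^ a1 * y 3 ^ (b1 - 1)
        + y 0 * y 2 ^ c1 * y 3 ^ (d1 - 1) * x 1 * x 2 ^ a2 * x 3 ^ (b2 - 1)) :
    (∀ x y : Fin 5 → K, x 0 * x 1 = x 3 * x 4 → y 0 * y 1 = y 3 * y 4 →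
      mul x y 0 * mul x y 1 = mul x y 3 * mul x y 4) ∧
    (∀ x y z : Fin 5 → K, x 0 * x 1 = x 3 * x 4 → y 0 * y 1 = y 3 * y 4 →
      z 0 * z 1 = z 3 * z 4 → mul (mul x y) z = mul x (mul y z)) ∧
    (∀ e : Fin 5 → K, (e 0 = 0 ∧ e 1 = 0 ∧ e 2 = 1 ∧ e 3 = 1 ∧ e 4 = 0) →
      e 0 * e 1 = e 3 * e 4 ∧
      ∀ x : Fin 5 → K, x 0 * x 1 = x 3 * x 4 → mul e x = x ∧ mul x e = x) := by
  obtain ⟨B1, rfl⟩ : ∃ B, b1 = B + 1 := ⟨b1 - 1, (Nat.succ_pred_eq_of_pos hb1).symm⟩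
  obtain ⟨B2, rfl⟩ : ∃ B, b2 = B + 1 := ⟨b2 - 1, (Nat.succ_pred_eq_of_pos hb2).symm⟩
  obtain ⟨D1, rfl⟩ : ∃ B, d1 = B + 1 := ⟨d1 - 1, (Nat.succ_pred_eq_of_pos hd1).symm⟩
  obtain ⟨D2, rfl⟩ : ∃ B, d2 = B + 1 := ⟨d2 - 1, (Nat.succ_pred_eq_of_pos hd2).symm⟩
  have h1 : (B1 + 1) + (D1 + 1) - 1 = B1 + D1 + 1 := by omega
  have h2 : (B2 + 1) + (D2 + 1) - 1 = B2 + D2 + 1 := by omega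
  have h3 : B1 + 1 - 1 = B1 := by omega
  have h4 : B2 + 1 - 1 = B2 := by omega
  have h5 : D1 + 1 - 1 = D1 := by omega
  have h6 : D2 + 1 - 1 = D2 := by omega
  simp only [h1, h2, h3, h4, h5, h6] at hmul
  refine ⟨?_, ?_, ?_⟩
  · intro x y hx hy
    obtain ⟨m0, m1, m2, m3, m4⟩ := hmul x y
    rw [m0, m1, m3, m4]
    linear_combination (y 3 ^ 2 * y 2 ^ a1 * y 2 ^ c1 * y 3 ^ B1 * y 3 ^ D1) * hx
      + (x 3 ^ 2 * x 2 ^ a2 * x 2 ^ c2 * x 3 ^ B2 * x 3 ^ D2) * hy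
  · intro x y z _ _ _
    obtain ⟨m0, m1, m2, m3, m4⟩ := hmul x y
    obtain ⟨n0, n1, n2, n3, n4⟩ := hmul y z
    obtain ⟨l0, l1, l2, l3, l4⟩ := hmul (mul x y) z
    obtain ⟨r0, r1, r2, r3, r4⟩ := hmul x (mul y z)
    funext i
    fin_cases i
    · show mul (mul x y) z 0 = mul x (mul y z) 0
      rw [l0, r0, m0, m2, m3, n0, n2, n3]; ring
    · show mul (mul x y) z 1 = mul x (mul y z) 1
      rw [l1, r1, m1, m2, m3, n1, n2, n3]; ring
    · show mul (mul x y) z 2 = mul x (mul y z) 2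
      rw [l2, r2, m2, n2]; ring
    · show mul (mul x y) z 3 = mul x (mul y z) 3
      rw [l3, r3, m3, n3]; ring
    · show mul (mul x y) z 4 = mul x (mul y z) 4
      rw [l4, r4, m0, m1, m2, m3, m4, n0, n1, n2, n3, n4]; ring
  · rintro e ⟨he0, he1, he2, he3, he4⟩
    refine ⟨by rw [he0, he1, he3, he4]; ring, ?_⟩
    intro x hx
    constructor
    · obtain ⟨m0, m1, m2, m3, m4⟩ := hmul e x
      funext i
      fin_cases i
      · show mul e x 0 = x 0
        rw [m0]; simp [he0, he1, he2, he3, he4]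
      · show mul e x 1 = x 1
        rw [m1]; simp [he0, he1, he2, he3, he4]
      · show mul e x 2 = x 2
        rw [m2]; simp [he0, he1, he2, he3, he4]
      · show mul e x 3 = x 3
        rw [m3]; simp [he0, he1, he2, he3, he4]
      · show mul e x 4 = x 4
        rw [m4]; simp [he0, he1, he2, he3, he4]
    · obtain ⟨m0, m1, m2, m3, m4⟩ := hmul x e
      funext i
      fin_cases i
      · show mul x e 0 = x 0
        rw [m0]; simp [he0, he1, he2, he3, he4]
      · show mul x e 1 = x 1
        rw [m1]; simp [he0, he1, he2, he3, he4]
      · show mul x e 2 = x 2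
        rw [m2]; simp [he0, he1, he2, he3, he4]
      · show mul x e 3 = x 3
        rw [m3]; simp [he0, he1, he2, he3, he4]
      · show mul x e 4 = x 4
        rw [m4]; simp [he0, he1, he2, he3, he4]
end
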